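/- Let f : ℝⁿ → ℝ ∪ {+∞} and let (x, α) be a point with α > f(x) > -∞. Then every proximal normal vector to the epigraph of f at (x, α) is a proximal normal to the epigraph at (x, f(x)) and has zero last coordinate; i.e., N^prox_{epi f}(x, α) ⊆ N^prox_{epi f}(x, f(x)) ∩ (ℝⁿ × {0}). -/

import Mathlib

open Filter Metric Set
open scoped Topology RealInnerProductSpace

noncomputable section

abbrev Eu (n : ℕ) := EuclideanSpace ℝ (Fin n)

section GeneralDefs

variable {E F : Type*} [NormedAddCommGroup E] [NormedSpace ℝ E]
  [NormedAddCommGroup F] [NormedSpace ℝ F]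

/-- `v` is a proximal normal vector to `A` at `a`: for some `t > 0`,
`a` is a nearest point of `A` to `a + t • v`. -/
def proxNormal (A : Set E) (a : E) : Set E :=
  {v | ∃ t : ℝ, 0 < t ∧ ‖t • v‖ = Metric.infDist (a + t • v) A}

/-- the set of nearest points of `K` to `x` (metric projection). -/
def projSet (K : Set E) (x : E) : Set E :=
  {y | y ∈ K ∧ ∀ z ∈ K, ‖x - y‖ ≤ ‖x - z‖}

/-- the contingent (tangent) cone to `X` at `x`. -/
def tangCone (X : Set E) (x : E) : Set E :=
  {w | ∃ (t : ℕ → ℝ) (v : ℕ → E), (∀ k, 0 < t k) ∧ Tendsto t atTop (𝓝 0) ∧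
    Tendsto v atTop (𝓝 w) ∧ ∀ k, x + t k • v k ∈ X}

/-- `A` is locally closed at `a`. -/
def LocallyClosedAt (A : Set E) (a : E) : Prop := ∃ U ∈ 𝓝 a, IsClosed (A ∩ U)

/-- the graph of the restriction `S|_X`. -/
def svGraph (S : E → Set F) (X : Set E) : Set (E × F) := {p | p.1 ∈ X ∧ p.2 ∈ S p.1}

/-- the Lipschitz-like property of `S` relative to `X` at `x₀` for `u₀` with constant `κ`. -/
def LipschitzLikeRel (S : E → Set F) (X : Set E) (x₀ : E) (u₀ : F) (κ : ℝ) : Prop :=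
  LocallyClosedAt (svGraph S univ) (x₀, u₀) ∧
  ∃ V ∈ 𝓝 x₀, ∃ W ∈ 𝓝 u₀, ∀ x ∈ X ∩ V, ∀ x' ∈ X ∩ V, ∀ u ∈ S x' ∩ W,
    ∃ u'' ∈ S x, ‖u - u''‖ ≤ κ * ‖x' - x‖

/-- the graphical modulus of `S` relative to `X` at `x₀` for `u₀` (as an extended real,
the infimum of all Lipschitz-like constants). -/
def gmod (S : E → Set F) (X : Set E) (x₀ : E) (u₀ : F) : EReal :=
  sInf {c : EReal | ∃ κ : ℝ, 0 ≤ κ ∧ c = (κ : EReal) ∧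
    ∃ V ∈ 𝓝 x₀, ∃ W ∈ 𝓝 u₀, ∀ x ∈ X ∩ V, ∀ x' ∈ X ∩ V, ∀ u ∈ S x' ∩ W,
      ∃ u'' ∈ S x, ‖u - u''‖ ≤ κ * ‖x' - x‖}

/-- the horizon cone of `A`. -/
def horizonCone (A : Set E) : Set E :=
  {w | ∃ (a : ℕ → E) (l : ℕ → ℝ), (∀ k, a k ∈ A) ∧ (∀ k, 0 < l k) ∧
    Tendsto l atTop (𝓝 0) ∧ Tendsto (fun k => l k • a k) atTop (𝓝 w)}

/-- extended-real absolute difference `|a - b|`. -/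
def eabsdiff (a b : EReal) : EReal := max (a - b) (b - a)

/-- `f` is locally Lipschitz continuous at `x₀` relative to `X`. -/
def RelLipschitzAt (f : E → EReal) (X : Set E) (x₀ : E) : Prop :=
  ∃ κ : ℝ, 0 ≤ κ ∧ ∃ V ∈ 𝓝 x₀, ∀ x ∈ X ∩ V, ∀ y ∈ X ∩ V,
    eabsdiff (f x) (f y) ≤ ((κ * ‖x - y‖ : ℝ) : EReal)

/-- the Lipschitz modulus of `f` at `x₀` relative to `X` (as an extended real). -/
def relLipMod (f : E → EReal) (X : Set E) (x₀ : E) : EReal :=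
  sInf {c : EReal | ∃ κ : ℝ, 0 ≤ κ ∧ c = (κ : EReal) ∧ ∃ V ∈ 𝓝 x₀,
    ∀ x ∈ X ∩ V, ∀ y ∈ X ∩ V, eabsdiff (f x) (f y) ≤ ((κ * ‖x - y‖ : ℝ) : EReal)}

end GeneralDefs

section InnerDefs

variable {E F : Type*} [NormedAddCommGroup E] [InnerProductSpace ℝ E]
  [NormedAddCommGroup F] [InnerProductSpace ℝ F]

/-- the regular (Fréchet) normal cone to `A ⊆ E × F` at `a`. -/
def regNormalP (A : Set (E × F)) (a : E × F) : Set (E × F) :=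
  {v | ∀ ε : ℝ, 0 < ε → ∃ δ > 0, ∀ b ∈ A, ‖b - a‖ ≤ δ →
    ⟪v.1, b.1 - a.1⟫ + ⟪v.2, b.2 - a.2⟫ ≤ ε * ‖b - a‖}

/-- the limiting (Mordukhovich) normal cone to `A ⊆ E × F` at `a`. -/
def limNormalP (A : Set (E × F)) (a : E × F) : Set (E × F) :=
  {v | ∃ (b : ℕ → E × F) (w : ℕ → E × F), (∀ k, b k ∈ A) ∧
    (∀ k, w k ∈ regNormalP A (b k)) ∧ Tendsto b atTop (𝓝 a) ∧ Tendsto w atTop (𝓝 v)}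

/-- the limiting coderivative of `S` at `x` for `u`:
`xs ∈ coderiv S x u us ↔ (xs, -us) ∈ N_{graph S}(x, u)`. -/
def coderiv (S : E → Set F) (x : E) (u : F) (us : F) : Set E :=
  {xs | (xs, -us) ∈ limNormalP (svGraph S univ) (x, u)}

/-- the projectional coderivative of `S` at `x₀` for `u₀` with respect to `X`. -/
def projCoderiv (S : E → Set F) (X : Set E) (x₀ : E) (u₀ : F) (us : F) : Set E :=
  {xs | ∃ (x : ℕ → E) (u : ℕ → F) (xv : ℕ → E) (uv : ℕ → F) (y : ℕ → E),
    (∀ k, (x k, u k) ∈ svGraph S X) ∧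
    (∀ k, (xv k, -(uv k)) ∈ limNormalP (svGraph S X) (x k, u k)) ∧
    (∀ k, y k ∈ projSet (tangCone X (x k)) (xv k)) ∧
    Tendsto x atTop (𝓝 x₀) ∧ Tendsto u atTop (𝓝 u₀) ∧
    Tendsto uv atTop (𝓝 us) ∧ Tendsto y atTop (𝓝 xs)}

/-- the regular (Fréchet) subdifferential of an extended-real-valued function. -/
def regSubdiff (g : E → EReal) (x : E) : Set E :=
  {v | ∀ ε : ℝ, 0 < ε → ∃ δ > 0, ∀ y, ‖y - x‖ ≤ δ →
    g x + ((⟪v, y - x⟫ - ε * ‖y - x‖ : ℝ) : EReal) ≤ g y}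

/-- the limiting (Mordukhovich) subdifferential. -/
def limSubdiff (g : E → EReal) (x : E) : Set E :=
  {v | ∃ (xk vk : ℕ → E), Tendsto xk atTop (𝓝 x) ∧
    Tendsto (fun k => g (xk k)) atTop (𝓝 (g x)) ∧
    (∀ k, vk k ∈ regSubdiff g (xk k)) ∧ Tendsto vk atTop (𝓝 v)}

/-- the horizon (singular) subdifferential. -/
def horizonSubdiff (g : E → EReal) (x : E) : Set E :=
  {v | ∃ (xk vk : ℕ → E) (lk : ℕ → ℝ), Tendsto xk atTop (𝓝 x) ∧
    Tendsto (fun k => g (xk k)) atTop (𝓝 (g x)) ∧ (∀ k, 0 < lk k) ∧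
    Tendsto lk atTop (𝓝 0) ∧ (∀ k, vk k ∈ regSubdiff g (xk k)) ∧
    Tendsto (fun k => lk k • vk k) atTop (𝓝 v)}

/-- the outer limiting subdifferential of `g` at `xb` with respect to `vb`. -/
def outerSubdiffWrt (g : E → EReal) (xb vb : E) : Set E :=
  {v | ∃ (xk vk : ℕ → E), Tendsto xk atTop (𝓝 xb) ∧
    Tendsto (fun k => g (xk k)) atTop (𝓝 (g xb)) ∧
    (∀ k, g xb + ((⟪vb, xk k - xb⟫ : ℝ) : EReal) < g (xk k)) ∧
    (∀ k, vk k ∈ limSubdiff g (xk k)) ∧ Tendsto vk atTop (𝓝 v)}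

/-- `D` is a convex polyhedron (finite intersection of closed half-spaces). -/
def IsPolyhedral (D : Set E) : Prop :=
  ∃ s : Finset (E × ℝ), D = {v | ∀ p ∈ s, ⟪p.1, v⟫ ≤ p.2}

/-- the support function of `D`. -/
def supportFn (D : Set E) : E → EReal :=
  fun x => sSup ((fun v => ((⟪v, x⟫ : ℝ) : EReal)) '' D)

end InnerDefs

/-- proximal normals to epigraphs (Lemma 3.1). -/
theorem prox_normal_epi {n : ℕ} (f : Eu n → EReal) (x : Eu n) (α : ℝ)
    (h1 : f x < (α : EReal)) (h2 : (⊥ : EReal) < f x) :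
    proxNormal
        {p : WithLp 2 (Eu n × ℝ) |
          f (WithLp.equiv 2 (Eu n × ℝ) p).1 ≤ (((WithLp.equiv 2 (Eu n × ℝ) p).2 : ℝ) : EReal)}
        ((WithLp.equiv 2 (Eu n × ℝ)).symm (x, α)) ⊆
      proxNormal
        {p : WithLp 2 (Eu n × ℝ) |
          f (WithLp.equiv 2 (Eu n × ℝ) p).1 ≤ (((WithLp.equiv 2 (Eu n × ℝ) p).2 : ℝ) : EReal)}
        ((WithLp.equiv 2 (Eu n × ℝ)).symm (x, (f x).toReal)) ∩
      {v : WithLp 2 (Eu n × ℝ) | (WithLp.equiv 2 (Eu n × ℝ) v).2 = 0} := by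
  
  set e := WithLp.equiv 2 (Eu n × ℝ) with he
  set A : Set (WithLp 2 (Eu n × ℝ)) :=
    {p | f (e p).1 ≤ (((e p).2 : ℝ) : EReal)} with hA
  intro v hv
  obtain ⟨t, ht, heq⟩ := hv
  set r : ℝ := (f x).toReal with hrdef
  have hfx : f x = (r : EReal) := (EReal.coe_toReal (h1.trans_le le_top).ne h2.ne').symm
  have hrα : r < α := by rw [hfx] at h1; exact_mod_cast h1
  set v1 : Eu n := (e v).1 with hv1
  set v2 : ℝ := (e v).2 with hv2def
  have hvsplit : v = e.symm (v1, v2) := rfl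
  -- membership lemma
  have hmem : ∀ (y : Eu n) (β : ℝ), f y ≤ (β : EReal) → e.symm (y, β) ∈ A := fun y β h => h
  -- z = (x, α) + t v
  have hz : e.symm (x, α) + t • v = e.symm (x + t • v1, α + t * v2) := rfl
  rw [hz] at heq
  -- distance formula helper
  have hdist : ∀ (a c : Eu n) (b d : ℝ),
      dist (e.symm (a, b)) (e.symm (c, d)) = Real.sqrt (dist a c ^ 2 + |b - d| ^ 2) := by
    intro a c b d
    rw [WithLp.prod_dist_eq_of_L2, Real.dist_eq]
    rfl
  have hnorm : ‖t • v‖ = Real.sqrt (‖t • v1‖ ^ 2 + |t * v2| ^ 2) := by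
    rw [WithLp.prod_norm_eq_of_L2, Real.norm_eq_abs]
    rfl
  -- Step 1 : v2 = 0
  have hv2 : v2 = 0 := by
    by_contra hv2
    set β : ℝ := max r (α + t * v2) with hβ
    have hβmem : e.symm (x, β) ∈ A := hmem x β (by rw [hfx]; exact_mod_cast le_max_left _ _)
    have hle : infDist (e.symm (x + t • v1, α + t * v2)) A
        ≤ dist (e.symm (x + t • v1, α + t * v2)) (e.symm (x, β)) :=
      infDist_le_dist_of_mem hβmem
    have hkey : |α + t * v2 - β| < |t * v2| := by
      rcases lt_or_gt_of_ne hv2 with hneg | hpos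
      · rcases le_or_gt r (α + t * v2) with hc | hc
        · rw [hβ, max_eq_right hc]
          simp only [sub_self, abs_zero]
          exact abs_pos.2 (mul_ne_zero ht.ne' hv2)
        · rw [hβ, max_eq_left hc.le, abs_sub_comm, abs_of_pos (by linarith),
            abs_of_neg (mul_neg_of_pos_of_neg ht hneg)]
          linarith
      · have hc : r ≤ α + t * v2 := by nlinarith
        rw [hβ, max_eq_right hc]
        simp only [sub_self, abs_zero]
        exact abs_pos.2 (mul_ne_zero ht.ne' hv2)
    have hdlt : dist (e.symm (x + t • v1, α + t * v2)) (e.symm (x, β)) < ‖t • v‖ := by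
      rw [hdist, hnorm]
      apply Real.sqrt_lt_sqrt (by positivity)
      have : dist (x + t • v1) x = ‖t • v1‖ := dist_self_add_left (t • v1) x
      rw [this]
      have : |α + t * v2 - β| ^ 2 < |t * v2| ^ 2 :=
        pow_lt_pow_left₀ hkey (abs_nonneg _) (by norm_num)
      linarith
    rw [heq] at hdlt
    exact absurd (hle.trans_lt hdlt) (lt_irrefl _)
  -- Step 2 : proximal normal at (x, r)
  refine ⟨⟨t, ht, ?_⟩, hv2⟩
  have hz' : e.symm (x, r) + t • v = e.symm (x + t • v1, r + t * v2) := rfl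
  rw [hz']
  have hr0 : r + t * v2 = r := by rw [hv2]; ring
  have hα0 : α + t * v2 = α := by rw [hv2]; ring
  rw [hr0]
  rw [hα0] at heq
  apply le_antisymm
  · -- lower bound
    by_contra hlt
    push_neg at hlt
    have hne : A.Nonempty := ⟨e.symm (x, α), hmem x α h1.le⟩
    obtain ⟨q, hq, hdq⟩ := (infDist_lt_iff hne).1 hlt
    -- q = (y, s) with f y ≤ s; shift up by α - r
    set y : Eu n := (e q).1 with hy
    set s : ℝ := (e q).2 with hs
    have hqsplit : q = e.symm (y, s) := rfl
    have hq' : e.symm (y, s + (α - r)) ∈ A := by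
      apply hmem
      refine le_trans hq ?_
      exact_mod_cast by linarith
    have h1' : ‖t • v‖ ≤ dist (e.symm (x + t • v1, α)) (e.symm (y, s + (α - r))) :=
      heq.le.trans (infDist_le_dist_of_mem hq')
    have h2' : dist (e.symm (x + t • v1, α)) (e.symm (y, s + (α - r)))
        = dist (e.symm (x + t • v1, r)) q := by
      rw [hqsplit, hdist, hdist]
      congr 2
      rw [abs_sub_comm (r) s, abs_sub_comm s r]
      congr 1
      ring
    rw [h2'] at h1'
    exact absurd (h1'.trans_lt hdq) (lt_irrefl _)
  · -- upper bound: via (x, r) ∈ A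
    have hrm : e.symm (x, r) ∈ A := hmem x r (le_of_eq hfx)
    refine (infDist_le_dist_of_mem hrm).trans_eq ?_
    rw [hdist, hnorm, hv2, dist_self_add_left]
    norm_num
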